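/- If p_i(A) = A_i (i-punctual distance-regularity in its matrix form), then the average number of shortest i-paths per vertex satisfies ω_i·P̄_i = sqrt(p_i(λ0)·δ̄_i), i.e., P̄_i = (1/ω_i)·sqrt(p_i(λ0)·δ̄_i), where ω_i is the leading coefficient of p_i. -/

import Mathlib

open Matrix Polynomial Finset

/-- The distance-`i` matrix of a graph on `Fin n`. -/
noncomputable def distMatrix {n : ℕ} (G : SimpleGraph (Fin n)) (i : ℕ) :
    Matrix (Fin n) (Fin n) ℝ :=
  Matrix.of fun u v => if G.dist u v = i then 1 else 0

/-- The 0-1 matrix of pairs at distance at most `i` (`S_i`). -/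
noncomputable def ballMatrix {n : ℕ} (G : SimpleGraph (Fin n)) (i : ℕ) :
    Matrix (Fin n) (Fin n) ℝ :=
  Matrix.of fun u v => if G.dist u v ≤ i then 1 else 0

/-- The normalized trace inner product `⟨R,S⟩ = (1/n) tr (R S)`. -/
noncomputable def ip {n : ℕ} (R S : Matrix (Fin n) (Fin n) ℝ) : ℝ :=
  (1 / (n : ℝ)) * (R * S).trace

/-- Average crossed local multiplicity `m̄_{ij} = ⟨E_j, A_i⟩ / ‖A_i‖²`. -/
noncomputable def mbar {n : ℕ} (G : SimpleGraph (Fin n)) (E : Matrix (Fin n) (Fin n) ℝ)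
    (i : ℕ) : ℝ :=
  ip E (distMatrix G i) / ip (distMatrix G i) (distMatrix G i)

/-- If `p_i(A) = A_i` then `ω_i · P̄_i = sqrt(p_i(λ0) · δ̄_i)`, i.e.
`P̄_i = (1/ω_i)·sqrt(p_i(λ0)·δ̄_i)`, where `P̄_i = ⟨A^i, A_i⟩` is the average number of
shortest `i`-paths from a vertex and `ω_i` is the leading coefficient of `p_i`. -/
lemma adjMatrix_pow_eq_zero_of_lt_dist {n : ℕ} (G : SimpleGraph (Fin n)) [DecidableRel G.Adj]
    {u v : Fin n} {k : ℕ} (h : k < G.dist u v) : ((G.adjMatrix ℝ) ^ k) u v = 0 := by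
  rw [SimpleGraph.adjMatrix_pow_apply_eq_card_walk]
  norm_cast
  rw [Fintype.card_eq_zero_iff]
  refine ⟨fun qh => ?_⟩
  obtain ⟨q, hq⟩ := qh
  have := G.dist_le q
  simp only [Set.mem_setOf_eq] at hq
  omega

theorem avg_shortest_paths_of_punctually_distance_regular
    {n d i : ℕ} (hn : 0 < n) (G : SimpleGraph (Fin n)) [DecidableRel G.Adj]
    (hconn : G.Connected) (δ : ℕ) (hreg : G.IsRegularOfDegree δ)
    (hdiam : G.diam = d) (hi : i ≤ d)
    (lam0 : ℝ) (hlam0 : lam0 = (δ : ℝ))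
    (p : Polynomial ℝ) (hdeg : p.natDegree = i) (ω : ℝ) (hω : p.leadingCoeff = ω) (hωne : ω ≠ 0)
    (hpnorm : ip (Polynomial.aeval (G.adjMatrix ℝ) p) (Polynomial.aeval (G.adjMatrix ℝ) p)
      = p.eval lam0)
    (δbar Pbar : ℝ) (hδ : δbar = ip (distMatrix G i) (distMatrix G i))
    (hPbar : Pbar = ip ((G.adjMatrix ℝ) ^ i) (distMatrix G i))
    (hpdr : Polynomial.aeval (G.adjMatrix ℝ) p = distMatrix G i) :
    ω * Pbar = Real.sqrt (p.eval lam0 * δbar) ∧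
    Pbar = (1 / ω) * Real.sqrt (p.eval lam0 * δbar) :=  by
  classical
  set A := G.adjMatrix ℝ with hA
  set Ai := distMatrix G i with hAi
  -- entrywise identity on the relevant entries
  have hentry : ∀ u v : Fin n, (Polynomial.aeval A p) u v * Ai v u = ω * (((A ^ i) u v) * Ai v u) := by
    intro u v
    by_cases hd : G.dist v u = i
    · have hd' : G.dist u v = i := by rwa [SimpleGraph.dist_comm]
      have h1 : Ai v u = 1 := by simp [hAi, distMatrix, hd]
      rw [h1, mul_one, mul_one]
      rw [Polynomial.aeval_eq_sum_range, hdeg]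
      rw [Finset.sum_range_succ]
      simp only [Matrix.add_apply, Matrix.sum_apply]
      have hz : ∀ k ∈ Finset.range i, (p.coeff k • A ^ k) u v = 0 := by
        intro k hk
        rw [Finset.mem_range] at hk
        have : (A ^ k) u v = 0 := adjMatrix_pow_eq_zero_of_lt_dist G (u := u) (v := v) (k := k) (by omega)
        simp [Matrix.smul_apply, this]
      rw [Finset.sum_eq_zero hz, zero_add]
      have : p.coeff i = ω := by rw [← hdeg, Polynomial.coeff_natDegree, hω]
      simp [Matrix.smul_apply, this]
    · have h0 : Ai v u = 0 := by simp [hAi, distMatrix, hd]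
      rw [h0, mul_zero, mul_zero, mul_zero]
  -- trace identity
  have htr : ((Polynomial.aeval A p) * Ai).trace = ω * ((A ^ i) * Ai).trace := by
    simp only [Matrix.trace, Matrix.diag, Matrix.mul_apply, Finset.mul_sum]
    exact Finset.sum_congr rfl fun u _ => Finset.sum_congr rfl fun v _ => hentry u v
  have key : ω * Pbar = δbar := by
    rw [hpdr] at htr
    rw [hPbar, hδ, ip, ip, htr]
    ring
  have hδval : δbar = p.eval lam0 := by rw [hδ, ← hpdr, hpnorm]
  have hδnn : 0 ≤ δbar := by
    rw [hδ, ip]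
    apply mul_nonneg (by positivity)
    simp only [Matrix.trace, Matrix.diag, Matrix.mul_apply]
    apply Finset.sum_nonneg; intro u _
    apply Finset.sum_nonneg; intro v _
    simp only [hAi, distMatrix, Matrix.of_apply]
    positivity
  have hsqrt : Real.sqrt (p.eval lam0 * δbar) = δbar := by
    rw [← hδval, Real.sqrt_mul_self hδnn]
  constructor
  · rw [hsqrt, key]
  · rw [hsqrt, ← key]; field_simp
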